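/- Let v_1,...,v_m ∈ ℤ² be a spanning configuration of primitive vectors that is 2-regular: for every pair of linearly independent vectors v_i, v_j in the configuration, the index [ℤ² : ⟨v_i, v_j⟩] is 1 or 2. Then for every odd integer q ≥ 3 and every a ∈ (1/q)ℤ², there exists x ∈ ℤ² with |⟨a - x, v_j⟩| < 1 for all j = 1,...,m. -/
import Mathlib


def dd (x y : Fin 2 → ℤ) : ℤ := x 0 * y 1 - x 1 * y 0

lemma dd_def (x y : Fin 2 → ℤ) : dd x y = x 0 * y 1 - x 1 * y 0 := rfl

lemma coprime_coords {w p r : Fin 2 → ℤ} {α β : ℤ}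
    (hw : IsCoprime (w 0) (w 1)) (h : ∀ i, w i = α * p i + β * r i) :
    IsCoprime α β := by
  obtain ⟨u, t, hut⟩ := hw
  rw [h 0, h 1] at hut
  exact ⟨u * p 0 + t * p 1, u * r 0 + t * r 1, by linear_combination hut⟩

lemma not_even_even {a b : ℤ} (h : IsCoprime a b) (ha : a % 2 = 0) (hb : b % 2 = 0) : False := by
  obtain ⟨u, t, hut⟩ := h
  obtain ⟨a', rfl⟩ : 2 ∣ a := Int.dvd_of_emod_eq_zero ha
  obtain ⟨b', rfl⟩ : 2 ∣ b := Int.dvd_of_emod_eq_zero hb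
  have h2 : (2:ℤ) ∣ 1 := ⟨u * a' + t * b', by linear_combination -hut⟩
  norm_num at h2

attribute [irreducible] dd

lemma dd_cramer (p r w : Fin 2 → ℤ) (i : Fin 2) :
    dd p r * w i = dd w r * p i + dd p w * r i := by
  rw [dd_def, dd_def, dd_def]
  fin_cases i <;> simp <;> ring


lemma li_of_dd {x y : Fin 2 → ℤ} (h : dd x y ≠ 0) :
    LinearIndependent ℝ ![fun i => (x i : ℝ), fun i => (y i : ℝ)] := by
  rw [dd_def] at h
  rw [linearIndependent_fin2]
  constructor
  · simp only [Matrix.cons_val_one, Matrix.head_cons]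
    intro hy
    apply h
    have h0 : (y 0 : ℝ) = 0 := congrFun hy 0
    have h1 : (y 1 : ℝ) = 0 := congrFun hy 1
    have hy0 : y 0 = 0 := by exact_mod_cast h0
    have hy1 : y 1 = 0 := by exact_mod_cast h1
    rw [hy0, hy1]; ring
  · intro a ha
    apply h
    simp only [Matrix.cons_val_one, Matrix.head_cons, Matrix.cons_val_zero] at ha
    have h0 : a * (y 0 : ℝ) = (x 0 : ℝ) := congrFun ha 0
    have h1 : a * (y 1 : ℝ) = (x 1 : ℝ) := congrFun ha 1
    have : ((x 0 * y 1 - x 1 * y 0 : ℤ) : ℝ) = 0 := by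
      push_cast
      linear_combination (y 0 : ℝ) * h1 - (y 1 : ℝ) * h0
    exact_mod_cast this

lemma exists_pair {m : ℕ} (v : Fin m → Fin 2 → ℤ)
    (hprim : ∀ j, IsCoprime (v j 0) (v j 1))
    (hspan : Submodule.span ℝ (Set.range fun j => fun i => (v j i : ℝ)) = ⊤) :
    ∃ j k, dd (v j) (v k) ≠ 0 := by
  by_contra hc
  push_neg at hc
  rcases Nat.eq_zero_or_pos m with rfl | hm
  · rw [Set.range_eq_empty, Submodule.span_empty] at hspan
    have : (fun _ : Fin 2 => (1:ℝ)) ∈ (⊥ : Submodule ℝ (Fin 2 → ℝ)) := hspan ▸ Submodule.mem_top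
    rw [Submodule.mem_bot] at this
    exact one_ne_zero (congrFun this 0)
  · set j : Fin m := ⟨0, hm⟩
    have hmem : ∀ k, (fun i => (v k i : ℝ)) ∈ Submodule.span ℝ {(fun i => (v j i : ℝ))} := by
      intro k
      rw [Submodule.mem_span_singleton]
      have hd : (v j 0) * (v k 1) - (v j 1) * (v k 0) = 0 := by
        rw [← dd_def]; exact hc j k
      have hjne : ¬ (v j 0 = 0 ∧ v j 1 = 0) := by
        rintro ⟨h1, h2⟩
        exact not_isCoprime_zero_zero (h1 ▸ h2 ▸ hprim j)
      by_cases h1 : v j 0 = 0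
      · have h2 : v j 1 ≠ 0 := fun h => hjne ⟨h1, h⟩
        refine ⟨(v k 1 : ℝ) / (v j 1 : ℝ), ?_⟩
        funext i
        have hj1 : (v j 1 : ℝ) ≠ 0 := Int.cast_ne_zero.mpr h2
        have h01 : i = 0 ∨ i = 1 := by omega
        rcases h01 with rfl | rfl <;> simp only [Pi.smul_apply, smul_eq_mul]
        · have : v k 0 = 0 := by
            have := hd; rw [h1] at this; simp at this
            rcases this with h | h
            · exact absurd h h2
            · exact h
          rw [h1, this]; simp
        · field_simp
      · refine ⟨(v k 0 : ℝ) / (v j 0 : ℝ), ?_⟩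
        funext i
        have hj0 : (v j 0 : ℝ) ≠ 0 := Int.cast_ne_zero.mpr h1
        have h01 : i = 0 ∨ i = 1 := by omega
        rcases h01 with rfl | rfl <;> simp only [Pi.smul_apply, smul_eq_mul]
        · field_simp
        · have hdr : (v j 0 : ℝ) * (v k 1 : ℝ) = (v j 1 : ℝ) * (v k 0 : ℝ) := by
            exact_mod_cast congrArg (Int.cast : ℤ → ℝ) (by linarith [hd] : (v j 0) * (v k 1) = (v j 1) * (v k 0))
          field_simp
          linarith [hdr]
    have hle : Submodule.span ℝ (Set.range fun k => fun i => (v k i : ℝ)) ≤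
        Submodule.span ℝ {(fun i => (v j i : ℝ))} := by
      rw [Submodule.span_le]
      rintro z ⟨k, rfl⟩
      exact hmem k
    rw [hspan] at hle
    obtain ⟨c1, hc1⟩ := Submodule.mem_span_singleton.mp (hle (Submodule.mem_top (x := (Pi.single 0 1 : Fin 2 → ℝ))))
    obtain ⟨c2, hc2⟩ := Submodule.mem_span_singleton.mp (hle (Submodule.mem_top (x := (Pi.single 1 1 : Fin 2 → ℝ))))
    have e10 : c1 * (v j 0 : ℝ) = 1 := by simpa using congrFun hc1 0
    have e11 : c1 * (v j 1 : ℝ) = 0 := by simpa using congrFun hc1 1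
    have e20 : c2 * (v j 0 : ℝ) = 0 := by simpa using congrFun hc2 0
    have e21 : c2 * (v j 1 : ℝ) = 1 := by simpa using congrFun hc2 1
    rcases mul_eq_zero.mp e11 with h | h
    · rw [h, zero_mul] at e10; exact one_ne_zero e10.symm
    · rw [h, mul_zero] at e21; exact one_ne_zero e21.symm

lemma centered (q : ℤ) (hq3 : 3 ≤ q) (hodd : q % 2 = 1) (c : ℤ) :
    ∃ s k : ℤ, c = s + q * k ∧ -(q-1) ≤ 2 * s ∧ 2 * s ≤ q - 1 := by
  have h0 : 0 ≤ c % q := Int.emod_nonneg c (by omega)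
  have h1 : c % q < q := Int.emod_lt_of_pos c (by omega)
  have hdiv : q * (c / q) + c % q = c := Int.mul_ediv_add_emod c q
  by_cases h : 2 * (c % q) ≤ q - 1
  · exact ⟨c % q, c / q, by omega, by omega, by omega⟩
  · refine ⟨c % q - q, c / q + 1, ?_, by omega, by omega⟩
    have hmul : q * (c / q + 1) = q * (c / q) + q := by ring
    omega

lemma index_det {x y : Fin 2 → ℤ} (hx : IsCoprime (x 0) (x 1)) (h0 : dd x y ≠ 0)
    (hI : (Submodule.span ℤ ({x, y} : Set (Fin 2 → ℤ))).toAddSubgroup.index = 1 ∨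
          (Submodule.span ℤ ({x, y} : Set (Fin 2 → ℤ))).toAddSubgroup.index = 2) :
    dd x y = 1 ∨ dd x y = -1 ∨ dd x y = 2 ∨ dd x y = -2 := by
  set n : ℕ := (dd x y).natAbs with hn
  let f : (Fin 2 → ℤ) →ₗ[ℤ] ZMod n := {
    toFun := fun w => ((x 0 * w 1 - x 1 * w 0 : ℤ) : ZMod n)
    map_add' := by intro a b; simp [Pi.add_apply]; push_cast; ring
    map_smul' := by intro c a; simp [Pi.smul_apply, smul_eq_mul]; push_cast; ring }
  have hfx : f x = 0 := by
    simp only [f, LinearMap.coe_mk, AddHom.coe_mk]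
    push_cast
    ring
  have hfy : f y = 0 := by
    have : ((dd x y : ℤ) : ZMod n) = 0 := by
      rw [ZMod.intCast_zmod_eq_zero_iff_dvd]
      exact Int.natAbs_dvd.mpr dvd_rfl
    rw [dd_def] at this
    simpa [f] using this
  have hker : (Submodule.span ℤ ({x, y} : Set (Fin 2 → ℤ))).toAddSubgroup ≤
      f.toAddMonoidHom.ker := by
    intro w hw
    have hw' : w ∈ Submodule.span ℤ ({x, y} : Set (Fin 2 → ℤ)) := hw
    have : w ∈ LinearMap.ker f := by
      refine Submodule.span_le.mpr ?_ hw'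
      rintro z (rfl | rfl) <;> simp [LinearMap.mem_ker, hfx, hfy]
    simpa [AddMonoidHom.mem_ker] using this
  have hsurj : Function.Surjective f := by
    intro z
    obtain ⟨t, rfl⟩ := ZMod.intCast_surjective z
    obtain ⟨a, b, hab⟩ := hx
    refine ⟨![-(t * b), t * a], ?_⟩
    show ((x 0 * (t * a) - x 1 * (-(t * b)) : ℤ) : ZMod n) = (t : ZMod n)
    have : x 0 * (t * a) - x 1 * (-(t * b)) = t := by linear_combination t * hab
    rw [this]
  have hind : f.toAddMonoidHom.ker.index = n := by
    rw [AddSubgroup.index_ker]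
    have : f.toAddMonoidHom.range = ⊤ := AddMonoidHom.range_eq_top.mpr hsurj
    rw [this]
    rw [Nat.card_congr AddSubgroup.topEquiv.toEquiv, Nat.card_zmod]
  have hdvd : n ∣ (Submodule.span ℤ ({x, y} : Set (Fin 2 → ℤ))).toAddSubgroup.index := by
    rw [← hind]; exact AddSubgroup.index_dvd_of_le hker
  have hn2 : n ∣ 2 := by
    rcases hI with h | h <;> rw [h] at hdvd
    · exact hdvd.trans ⟨2, rfl⟩
    · exact hdvd
  have := Nat.le_of_dvd (by norm_num) hn2
  omega

set_option maxHeartbeats 2000000 in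
lemma classify_case1 {m : ℕ} (v : Fin m → Fin 2 → ℤ)
    (hprim : ∀ j, IsCoprime (v j 0) (v j 1))
    (hdet : ∀ j k, -2 ≤ dd (v j) (v k) ∧ dd (v j) (v k) ≤ 2)
    (j k : Fin m) (hjk : dd (v j) (v k) = 1) :
    ∃ b1 b2 : Fin 2 → ℤ, (dd b1 b2 = 1 ∨ dd b1 b2 = -1) ∧
      ∀ l, ∃ α β : ℤ, -1 ≤ α ∧ α ≤ 1 ∧ -1 ≤ β ∧ β ≤ 1 ∧
        ∀ i, v l i = α * b1 i + β * b2 i := by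
  have hjk' : v j 0 * v k 1 - v j 1 * v k 0 = 1 := by rw [← dd_def]; exact hjk
  have hrep : ∀ l i, v l i = dd (v l) (v k) * v j i + dd (v j) (v l) * v k i := by
    intro l i
    have h := dd_cramer (v j) (v k) (v l) i
    rw [hjk] at h
    linarith
  have hcop : ∀ l, IsCoprime (dd (v l) (v k)) (dd (v j) (v l)) :=
    fun l => coprime_coords (hprim l) (hrep l)
  have hpar : ∀ l, ¬(dd (v l) (v k) % 2 = 0 ∧ dd (v j) (v l) % 2 = 0) :=
    fun l hh => not_even_even (hcop l) hh.1 hh.2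
  have hpair : ∀ l l', dd (v l) (v l') =
      dd (v l) (v k) * dd (v j) (v l') - dd (v j) (v l) * dd (v l') (v k) := by
    intro l l'
    simp only [dd_def]
    linear_combination (v l 1 * v l' 0 - v l 0 * v l' 1) * hjk'
  by_cases hbig : ∃ l, dd (v l) (v k) = 2 ∨ dd (v l) (v k) = -2 ∨
      dd (v j) (v l) = 2 ∨ dd (v j) (v l) = -2
  · obtain ⟨l0, hl0⟩ := hbig
    have hA0 := hdet l0 k
    have hB0 := hdet j l0
    have hpar0 := hpar l0
    have hcases :
        ((dd (v l0) (v k) = 1 ∧ dd (v j) (v l0) = 2) ∨ (dd (v l0) (v k) = -1 ∧ dd (v j) (v l0) = -2)) ∨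
        ((dd (v l0) (v k) = 1 ∧ dd (v j) (v l0) = -2) ∨ (dd (v l0) (v k) = -1 ∧ dd (v j) (v l0) = 2)) ∨
        ((dd (v l0) (v k) = 2 ∧ dd (v j) (v l0) = 1) ∨ (dd (v l0) (v k) = -2 ∧ dd (v j) (v l0) = -1)) ∨
        ((dd (v l0) (v k) = 2 ∧ dd (v j) (v l0) = -1) ∨ (dd (v l0) (v k) = -2 ∧ dd (v j) (v l0) = 1)) := by
      omega
    rcases hcases with h | h | h | h
    · -- (1,2) type : b1 = p + r, b2 = r, coords (α, β - α)
      refine ⟨fun i => v j i + v k i, v k, Or.inl (by simp only [dd_def]; linear_combination hjk'), fun l => ?_⟩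
      have hA := hdet l k
      have hB := hdet j l
      have hparl := hpar l
      have hb := hdet l l0
      have hp := hpair l l0
      rcases h with ⟨h1, h2⟩ | ⟨h1, h2⟩ <;> rw [h1, h2] at hp <;>
      · have hbnd : -1 ≤ dd (v l) (v k) ∧ dd (v l) (v k) ≤ 1 ∧ -1 ≤ dd (v j) (v l) - dd (v l) (v k) ∧ dd (v j) (v l) - dd (v l) (v k) ≤ 1 := by omega
        exact ⟨dd (v l) (v k), dd (v j) (v l) - dd (v l) (v k), hbnd.1, hbnd.2.1, hbnd.2.2.1, hbnd.2.2.2,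
          fun i => by linear_combination hrep l i⟩
    · -- (1,-2) type : b1 = p - r, b2 = r, coords (α, β + α)
      refine ⟨fun i => v j i - v k i, v k, Or.inl (by simp only [dd_def]; linear_combination hjk'), fun l => ?_⟩
      have hA := hdet l k
      have hB := hdet j l
      have hparl := hpar l
      have hb := hdet l l0
      have hp := hpair l l0
      rcases h with ⟨h1, h2⟩ | ⟨h1, h2⟩ <;> rw [h1, h2] at hp <;>
      · have hbnd : -1 ≤ dd (v l) (v k) ∧ dd (v l) (v k) ≤ 1 ∧ -1 ≤ dd (v j) (v l) + dd (v l) (v k) ∧ dd (v j) (v l) + dd (v l) (v k) ≤ 1 := by omega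
        exact ⟨dd (v l) (v k), dd (v j) (v l) + dd (v l) (v k), hbnd.1, hbnd.2.1, hbnd.2.2.1, hbnd.2.2.2,
          fun i => by linear_combination hrep l i⟩
    · -- (2,1) type : b1 = p, b2 = p + r, coords (α - β, β)
      refine ⟨v j, fun i => v j i + v k i, Or.inl (by simp only [dd_def]; linear_combination hjk'), fun l => ?_⟩
      have hA := hdet l k
      have hB := hdet j l
      have hparl := hpar l
      have hb := hdet l l0
      have hp := hpair l l0
      rcases h with ⟨h1, h2⟩ | ⟨h1, h2⟩ <;> rw [h1, h2] at hp <;>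
      · have hbnd : -1 ≤ dd (v l) (v k) - dd (v j) (v l) ∧ dd (v l) (v k) - dd (v j) (v l) ≤ 1 ∧ -1 ≤ dd (v j) (v l) ∧ dd (v j) (v l) ≤ 1 := by omega
        exact ⟨dd (v l) (v k) - dd (v j) (v l), dd (v j) (v l), hbnd.1, hbnd.2.1, hbnd.2.2.1, hbnd.2.2.2,
          fun i => by linear_combination hrep l i⟩
    · -- (2,-1) type : b1 = p, b2 = r - p, coords (α + β, β)
      refine ⟨v j, fun i => v k i - v j i, Or.inl (by simp only [dd_def]; linear_combination hjk'), fun l => ?_⟩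
      have hA := hdet l k
      have hB := hdet j l
      have hparl := hpar l
      have hb := hdet l l0
      have hp := hpair l l0
      rcases h with ⟨h1, h2⟩ | ⟨h1, h2⟩ <;> rw [h1, h2] at hp <;>
      · have hbnd : -1 ≤ dd (v l) (v k) + dd (v j) (v l) ∧ dd (v l) (v k) + dd (v j) (v l) ≤ 1 ∧ -1 ≤ dd (v j) (v l) ∧ dd (v j) (v l) ≤ 1 := by omega
        exact ⟨dd (v l) (v k) + dd (v j) (v l), dd (v j) (v l), hbnd.1, hbnd.2.1, hbnd.2.2.1, hbnd.2.2.2,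
          fun i => by linear_combination hrep l i⟩
  · push_neg at hbig
    refine ⟨v j, v k, Or.inl hjk, fun l => ?_⟩
    have hA := hdet l k
    have hB := hdet j l
    have h := hbig l
    exact ⟨dd (v l) (v k), dd (v j) (v l), by omega, by omega, by omega, by omega, hrep l⟩

set_option maxHeartbeats 1000000 in
lemma classify_case2 {m : ℕ} (v : Fin m → Fin 2 → ℤ)
    (hprim : ∀ j, IsCoprime (v j 0) (v j 1))
    (hall : ∀ j k, dd (v j) (v k) = 0 ∨ dd (v j) (v k) = 2 ∨ dd (v j) (v k) = -2)
    (j0 k0 : Fin m) (h0 : dd (v j0) (v k0) ≠ 0) :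
    ∃ b1 b2 : Fin 2 → ℤ, (dd b1 b2 = 1 ∨ dd b1 b2 = -1) ∧
      ∀ l, ∃ α β : ℤ, -1 ≤ α ∧ α ≤ 1 ∧ -1 ≤ β ∧ β ≤ 1 ∧
        ∀ i, v l i = α * b1 i + β * b2 i := by
  have hD : dd (v j0) (v k0) = 2 ∨ dd (v j0) (v k0) = -2 := by
    have := hall j0 k0; tauto
  -- parity: v j0 ≡ v k0 mod 2
  have key : ∀ x0 x1 y0 y1 : ZMod 2, ¬(x0 = 0 ∧ x1 = 0) → ¬(y0 = 0 ∧ y1 = 0) →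
      x0 * y1 - x1 * y0 = 0 → (x0 = y0 ∧ x1 = y1) := by decide
  have hcast : ∀ l, ¬(((v l 0 : ℤ) : ZMod 2) = 0 ∧ ((v l 1 : ℤ) : ZMod 2) = 0) := by
    rintro l ⟨h1, h2⟩
    rw [ZMod.intCast_zmod_eq_zero_iff_dvd] at h1 h2
    have h1' : (2:ℤ) ∣ v l 0 := by exact_mod_cast h1
    have h2' : (2:ℤ) ∣ v l 1 := by exact_mod_cast h2
    exact not_even_even (hprim l) (Int.emod_eq_zero_of_dvd h1') (Int.emod_eq_zero_of_dvd h2')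
  have hdd2 : ((v j0 0 : ZMod 2)) * (v k0 1 : ZMod 2) - (v j0 1 : ZMod 2) * (v k0 0 : ZMod 2) = 0 := by
    have : ((dd (v j0) (v k0) : ℤ) : ZMod 2) = 0 := by
      rcases hD with h | h <;> rw [h] <;> decide
    rw [dd_def] at this
    push_cast at this
    exact this
  have hpar := key _ _ _ _ (hcast j0) (hcast k0) hdd2
  have hpr0 : (2:ℤ) ∣ v j0 0 - v k0 0 := by
    have := hpar.1
    rwa [← sub_eq_zero, ← Int.cast_sub, ZMod.intCast_zmod_eq_zero_iff_dvd] at this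
  have hpr1 : (2:ℤ) ∣ v j0 1 - v k0 1 := by
    have := hpar.2
    rwa [← sub_eq_zero, ← Int.cast_sub, ZMod.intCast_zmod_eq_zero_iff_dvd] at this
  -- each vector is ± v j0 or ± v k0
  have hform : ∀ l, ∃ α β : ℤ,
      (((α = 1 ∨ α = -1) ∧ β = 0) ∨ (α = 0 ∧ (β = 1 ∨ β = -1))) ∧
      ∀ i, v l i = α * v j0 i + β * v k0 i := by
    intro l
    have hcr : ∀ i, dd (v j0) (v k0) * v l i =
        dd (v l) (v k0) * v j0 i + dd (v j0) (v l) * v k0 i := dd_cramer _ _ _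
    have hA := hall l k0
    have hB := hall j0 l
    by_cases hA0 : dd (v l) (v k0) = 0
    · by_cases hB0 : dd (v j0) (v l) = 0
      · exfalso
        have h00 : v l 0 = 0 := by have := hcr 0; rw [hA0, hB0] at this; rcases hD with h|h <;> rw [h] at this <;> omega
        have h11 : v l 1 = 0 := by have := hcr 1; rw [hA0, hB0] at this; rcases hD with h|h <;> rw [h] at this <;> omega
        exact not_isCoprime_zero_zero (h00 ▸ h11 ▸ hprim l)
      · have hB2 : dd (v j0) (v l) = 2 ∨ dd (v j0) (v l) = -2 := by tauto
        rcases hD with hD | hD <;> rcases hB2 with hB | hB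
        · exact ⟨0, 1, by tauto, fun i => by have := hcr i; rw [hD, hB, hA0] at this; omega⟩
        · exact ⟨0, -1, by tauto, fun i => by have := hcr i; rw [hD, hB, hA0] at this; omega⟩
        · exact ⟨0, -1, by tauto, fun i => by have := hcr i; rw [hD, hB, hA0] at this; omega⟩
        · exact ⟨0, 1, by tauto, fun i => by have := hcr i; rw [hD, hB, hA0] at this; omega⟩
    · by_cases hB0 : dd (v j0) (v l) = 0
      · have hA2 : dd (v l) (v k0) = 2 ∨ dd (v l) (v k0) = -2 := by tauto
        rcases hD with hD | hD <;> rcases hA2 with hA' | hA'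
        · exact ⟨1, 0, by tauto, fun i => by have := hcr i; rw [hD, hA', hB0] at this; omega⟩
        · exact ⟨-1, 0, by tauto, fun i => by have := hcr i; rw [hD, hA', hB0] at this; omega⟩
        · exact ⟨-1, 0, by tauto, fun i => by have := hcr i; rw [hD, hA', hB0] at this; omega⟩
        · exact ⟨1, 0, by tauto, fun i => by have := hcr i; rw [hD, hA', hB0] at this; omega⟩
      · exfalso
        have hA2 : dd (v l) (v k0) = 2 ∨ dd (v l) (v k0) = -2 := by tauto
        have hB2 : dd (v j0) (v l) = 2 ∨ dd (v j0) (v l) = -2 := by tauto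
        have e0 := hcr 0
        have e1 := hcr 1
        rcases hD with hD | hD <;> rcases hA2 with hA' | hA' <;> rcases hB2 with hB | hB <;>
          rw [hD, hA', hB] at e0 e1 <;>
          exact not_even_even (hprim l) (by omega) (by omega)
  -- build the basis
  obtain ⟨u, w, huw⟩ := hprim j0
  set z : Fin 2 → ℤ := ![-w, u] with hz
  have hz0 : z 0 = -w := rfl
  have hz1 : z 1 = u := rfl
  have hpz : dd (v j0) z = 1 := by
    rw [dd_def, hz0, hz1]; linear_combination huw
  have hrk : ∀ i, v k0 i = dd (v k0) z * v j0 i + dd (v j0) (v k0) * z i := by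
    intro i
    have h := dd_cramer (v j0) z (v k0) i
    rw [hpz] at h
    linarith
  have hcopk : IsCoprime (dd (v k0) z) (dd (v j0) (v k0)) := coprime_coords (hprim k0) hrk
  have hA0odd : dd (v k0) z % 2 = 1 := by
    have h2 : dd (v j0) (v k0) % 2 = 0 := by rcases hD with h | h <;> rw [h] <;> decide
    have h4 : dd (v k0) z % 2 ≠ 0 := fun h => not_even_even hcopk h h2
    omega
  have ht : dd (v k0) z - 2 * ((dd (v k0) z - 1) / 2) = 1 := by omega
  set t : ℤ := (dd (v k0) z - 1) / 2 with htdef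
  rcases hD with hD | hD
  · -- D = 2 : w2 = z + t p
    set w2 : Fin 2 → ℤ := fun i => z i + t * v j0 i with hw2def
    have hw2 : ∀ i, v k0 i = v j0 i + 2 * w2 i := by
      intro i
      have h := hrk i
      rw [hD] at h
      show v k0 i = v j0 i + 2 * (z i + t * v j0 i)
      linear_combination h + v j0 i * ht
    have hpw2 : dd (v j0) w2 = 1 := by
      rw [dd_def]
      show v j0 0 * (z 1 + t * v j0 1) - v j0 1 * (z 0 + t * v j0 0) = 1
      rw [dd_def] at hpz
      linear_combination hpz
    refine ⟨fun i => v j0 i + w2 i, w2, Or.inl ?_, fun l => ?_⟩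
    · rw [dd_def]
      show (v j0 0 + w2 0) * w2 1 - (v j0 1 + w2 1) * w2 0 = 1
      rw [dd_def] at hpw2
      linear_combination hpw2
    · obtain ⟨α, β, hshape, hco⟩ := hform l
      refine ⟨α + β, β - α, by omega, by omega, by omega, by omega, fun i => ?_⟩
      have h1 := hco i
      have h2 := hw2 i
      show v l i = (α + β) * (v j0 i + w2 i) + (β - α) * w2 i
      linear_combination h1 + β * h2
  · -- D = -2 : w2 = -z + t p
    set w2 : Fin 2 → ℤ := fun i => -z i + t * v j0 i with hw2def
    have hw2 : ∀ i, v k0 i = v j0 i + 2 * w2 i := by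
      intro i
      have h := hrk i
      rw [hD] at h
      show v k0 i = v j0 i + 2 * (-z i + t * v j0 i)
      linear_combination h + v j0 i * ht
    have hpw2 : dd (v j0) w2 = -1 := by
      rw [dd_def]
      show v j0 0 * (-z 1 + t * v j0 1) - v j0 1 * (-z 0 + t * v j0 0) = -1
      rw [dd_def] at hpz
      linear_combination -hpz
    refine ⟨fun i => v j0 i + w2 i, w2, Or.inr ?_, fun l => ?_⟩
    · rw [dd_def]
      show (v j0 0 + w2 0) * w2 1 - (v j0 1 + w2 1) * w2 0 = -1
      rw [dd_def] at hpw2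
      linear_combination hpw2
    · obtain ⟨α, β, hshape, hco⟩ := hform l
      refine ⟨α + β, β - α, by omega, by omega, by omega, by omega, fun i => ?_⟩
      have h1 := hco i
      have h2 := hw2 i
      show v l i = (α + β) * (v j0 i + w2 i) + (β - α) * w2 i
      linear_combination h1 + β * h2

lemma classify {m : ℕ} (v : Fin m → Fin 2 → ℤ)
    (hprim : ∀ j, IsCoprime (v j 0) (v j 1))
    (hdet : ∀ j k, -2 ≤ dd (v j) (v k) ∧ dd (v j) (v k) ≤ 2)
    (j0 k0 : Fin m) (h0 : dd (v j0) (v k0) ≠ 0) :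
    ∃ b1 b2 : Fin 2 → ℤ, (dd b1 b2 = 1 ∨ dd b1 b2 = -1) ∧
      ∀ l, ∃ α β : ℤ, -1 ≤ α ∧ α ≤ 1 ∧ -1 ≤ β ∧ β ≤ 1 ∧
        ∀ i, v l i = α * b1 i + β * b2 i := by
  by_cases hone : ∃ j k, dd (v j) (v k) = 1
  · obtain ⟨j, k, hjk⟩ := hone
    exact classify_case1 v hprim hdet j k hjk
  · push_neg at hone
    have hall : ∀ j k, dd (v j) (v k) = 0 ∨ dd (v j) (v k) = 2 ∨ dd (v j) (v k) = -2 := by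
      intro j k
      have h1 := hdet j k
      have h2 := hone j k
      have h3 := hone k j
      have hanti : dd (v k) (v j) = -dd (v j) (v k) := by rw [dd_def, dd_def]; ring
      omega
    exact classify_case2 v hprim hall j0 k0 h0

/-- Theorem 1.5: If `v 1, ..., v m ∈ ℤ²` are primitive, span ℝ², and
every linearly independent pair spans a sublattice of index 1 or 2, then for every odd
`q ≥ 3` each class of `(1/q)ℤ²/ℤ²` has a representative in
`{u : |⟨u, v j⟩| < 1 ∀ j}`. -/
theorem stmt11 (m : ℕ) (v : Fin m → Fin 2 → ℤ)
    (hprim : ∀ j, IsCoprime (v j 0) (v j 1))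
    (hspan : Submodule.span ℝ (Set.range fun j => fun i => (v j i : ℝ)) = ⊤)
    (h2reg : ∀ j k : Fin m,
      LinearIndependent ℝ ![fun i => (v j i : ℝ), fun i => (v k i : ℝ)] →
      (Submodule.span ℤ ({v j, v k} : Set (Fin 2 → ℤ))).toAddSubgroup.index = 1 ∨
        (Submodule.span ℤ ({v j, v k} : Set (Fin 2 → ℤ))).toAddSubgroup.index = 2)
    (q : ℕ) (hq : 3 ≤ q) (hodd : Odd q) :
    ∀ a : Fin 2 → ℝ, (∀ i, ∃ k : ℤ, a i = (k : ℝ) / q) →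
      ∃ x : Fin 2 → ℤ, ∀ j, |∑ i, (a i - (x i : ℝ)) * (v j i : ℝ)| < 1 := by
  intro a ha
  choose c hc using ha
  have hq3 : (3:ℤ) ≤ (q:ℤ) := by exact_mod_cast hq
  have hoddz : (q:ℤ) % 2 = 1 := by
    obtain ⟨t, ht⟩ := hodd
    have : (q:ℤ) = 2 * t + 1 := by exact_mod_cast ht
    omega
  have hdet : ∀ j k, -2 ≤ dd (v j) (v k) ∧ dd (v j) (v k) ≤ 2 := by
    intro j k
    by_cases h : dd (v j) (v k) = 0
    · rw [h]; constructor <;> norm_num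
    · have := index_det (hprim j) h (h2reg j k (li_of_dd h))
      omega
  obtain ⟨j0, k0, h0⟩ := exists_pair v hprim hspan
  obtain ⟨b1, b2, hb, hcoords⟩ := classify v hprim hdet j0 k0 h0
  obtain ⟨s1, k1, hs1, hs1l, hs1r⟩ := centered (q:ℤ) hq3 hoddz (c 0 * b1 0 + c 1 * b1 1)
  obtain ⟨s2, k2, hs2, hs2l, hs2r⟩ := centered (q:ℤ) hq3 hoddz (c 0 * b2 0 + c 1 * b2 1)
  have hΔ2 : dd b1 b2 * dd b1 b2 = 1 := by rcases hb with h | h <;> rw [h] <;> norm_num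
  have hΔ : b1 0 * b2 1 - b1 1 * b2 0 = dd b1 b2 := (dd_def b1 b2).symm
  set X0 : ℤ := dd b1 b2 * (k1 * b2 1 - k2 * b1 1) with hX0
  set X1 : ℤ := dd b1 b2 * (k2 * b1 0 - k1 * b2 0) with hX1
  have hxb1 : X0 * b1 0 + X1 * b1 1 = k1 := by
    rw [hX0, hX1]
    linear_combination (dd b1 b2 * k1) * hΔ + k1 * hΔ2
  have hxb2 : X0 * b2 0 + X1 * b2 1 = k2 := by
    rw [hX0, hX1]
    linear_combination (dd b1 b2 * k2) * hΔ + k2 * hΔ2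
  refine ⟨![X0, X1], fun j => ?_⟩
  obtain ⟨α, β, ha1, ha2, hb1, hb2', hrepj⟩ := hcoords j
  have hkey : (c 0 - (q:ℤ) * X0) * v j 0 + (c 1 - (q:ℤ) * X1) * v j 1 = α * s1 + β * s2 := by
    have e0 := hrepj 0
    have e1 := hrepj 1
    linear_combination (c 0 - (q:ℤ) * X0) * e0 + (c 1 - (q:ℤ) * X1) * e1 + α * hs1 + β * hs2
      - (q:ℤ) * α * hxb1 - (q:ℤ) * β * hxb2
  have hα : α = -1 ∨ α = 0 ∨ α = 1 := by omega
  have hβ : β = -1 ∨ β = 0 ∨ β = 1 := by omega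
  have hNb : -(q:ℤ) < α * s1 + β * s2 ∧ α * s1 + β * s2 < (q:ℤ) := by
    rcases hα with rfl | rfl | rfl <;> rcases hβ with rfl | rfl | rfl <;>
      constructor <;> omega
  have hq0 : (0:ℝ) < (q:ℝ) := by exact_mod_cast (by omega : 0 < q)
  rw [Fin.sum_univ_two]
  have hx0 : (![X0, X1] : Fin 2 → ℤ) 0 = X0 := rfl
  have hx1 : (![X0, X1] : Fin 2 → ℤ) 1 = X1 := rfl
  rw [hx0, hx1, hc 0, hc 1]
  have key2 : ((c 0 : ℝ)/(q:ℝ) - (X0:ℝ)) * ((v j 0 : ℝ)) + ((c 1 : ℝ)/(q:ℝ) - (X1:ℝ)) * ((v j 1 : ℝ))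
      = ((α * s1 + β * s2 : ℤ) : ℝ) / (q:ℝ) := by
    have hkeyR : ((c 0 : ℝ) - (q:ℝ) * (X0:ℝ)) * ((v j 0 : ℝ)) + ((c 1 : ℝ) - (q:ℝ) * (X1:ℝ)) * ((v j 1 : ℝ))
        = ((α * s1 + β * s2 : ℤ) : ℝ) := by
      have h := congrArg (fun z : ℤ => (z : ℝ)) hkey
      push_cast at h
      convert h using 2 <;> push_cast <;> ring
    field_simp
    push_cast at hkeyR ⊢
    linear_combination hkeyR
  rw [key2, abs_div, abs_of_pos hq0, div_lt_one hq0]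
  have habs : |α * s1 + β * s2| < (q:ℤ) := abs_lt.mpr ⟨hNb.1, hNb.2⟩
  calc |((α * s1 + β * s2 : ℤ) : ℝ)| = ((|α * s1 + β * s2| : ℤ) : ℝ) := by rw [Int.cast_abs]
    _ < (q:ℝ) := by exact_mod_cast habs
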